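/- Let m ≥ 1 and let A be an m×m matrix with strictly positive integer entries such that every complex eigenvalue of A has modulus at most R (R a real number). Then every entry of A is at most m²·R². -/

import Mathlib

open Matrix Polynomial

variable {n : Type*} [DecidableEq n] [Fintype n]

lemma my_eval_charpoly (M : Matrix n n ℂ) (z : ℂ) :
    M.charpoly.eval z = (z • (1 : Matrix n n ℂ) - M).det := by
  rw [Matrix.charpoly, ← Polynomial.coe_evalRingHom, RingHom.map_det]
  congr 1
  ext i j
  by_cases h : i = j
  · subst h
    simp [charmatrix_apply_eq, Matrix.one_apply, Matrix.smul_apply]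
  · simp [charmatrix_apply_ne _ _ _ h, Matrix.one_apply_ne h, Matrix.smul_apply,
      Matrix.sub_apply, Matrix.one_apply]

lemma my_root_sq (m : ℕ) (R : ℝ) (B : Matrix (Fin m) (Fin m) ℂ)
    (hR : ∀ z : ℂ, B.charpoly.IsRoot z → ‖z‖ ≤ R)
    (μ : ℂ) (hμ : (B * B).charpoly.IsRoot μ) : ‖μ‖ ≤ R ^ 2 := by
  obtain ⟨s, hs⟩ := IsAlgClosed.exists_pow_nat_eq (k := ℂ) μ (n := 2) (by norm_num)
  have hfac : (s • (1 : Matrix (Fin m) (Fin m) ℂ) - B) * (s • 1 + B) = μ • 1 - B * B := by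
    rw [← hs]
    rw [sq, sub_mul, mul_add, mul_add, smul_mul_assoc, one_mul, smul_mul_assoc, one_mul,
      mul_smul_comm, mul_one, smul_smul]
    abel
  have hdet : ((s • (1 : Matrix (Fin m) (Fin m) ℂ) - B)).det * ((s • 1 + B)).det = 0 := by
    rw [← det_mul, hfac, ← my_eval_charpoly]
    exact hμ
  have habs : ‖s‖ ≤ R := by
    rcases mul_eq_zero.mp hdet with h | h
    · exact hR s (by rw [IsRoot, my_eval_charpoly]; exact h)
    · have h2 : ((-s) • (1 : Matrix (Fin m) (Fin m) ℂ) - B).det = 0 := by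
        have : ((-s) • (1 : Matrix (Fin m) (Fin m) ℂ) - B) = -(s • 1 + B) := by
          ext i j; simp [Matrix.smul_apply, Matrix.one_apply]; ring
        rw [this, det_neg, h, mul_zero]
      have := hR (-s) (by rw [IsRoot, my_eval_charpoly]; exact h2)
      simpa using this
  calc ‖μ‖ = ‖s‖ ^ 2 := by rw [← hs]; simp
    _ ≤ R ^ 2 := by
        apply pow_le_pow_left₀ (norm_nonneg s) habs

/-- If an `m × m` matrix with strictly positive integer entries has all complex
eigenvalues of modulus at most `R`, then every entry is at most `m² R²`. -/
theorem stmt_1 (m : ℕ) (hm : 1 ≤ m) (R : ℝ) (A : Matrix (Fin m) (Fin m) ℤ)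
    (hpos : ∀ i j, 1 ≤ A i j)
    (heig : ∀ z : ℂ, (A.charpoly.map (algebraMap ℤ ℂ)).IsRoot z →
      ‖z‖ ≤ R) :
    ∀ i j, (A i j : ℝ) ≤ (m : ℝ) ^ 2 * R ^ 2 := by
  intro i j
  have : NeZero m := ⟨by omega⟩
  set B : Matrix (Fin m) (Fin m) ℂ := A.map (algebraMap ℤ ℂ) with hB
  have hBchar : B.charpoly = A.charpoly.map (algebraMap ℤ ℂ) :=
    Matrix.charpoly_map A (algebraMap ℤ ℂ)
  -- all roots of charpoly of B*B have modulus ≤ R^2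
  have hroots : ∀ μ ∈ ((B * B).charpoly).roots, ‖μ‖ ≤ R ^ 2 := by
    intro μ hμ
    exact my_root_sq m R B (fun z hz => heig z (hBchar ▸ hz)) μ
      (isRoot_of_mem_roots hμ)
  have hcard : Multiset.card ((B * B).charpoly).roots = m := by
    have hdeg : (B * B).charpoly.natDegree = m := by
      rw [Matrix.charpoly_natDegree_eq_dim]; simp
    have hc := splits_iff_card_roots.mp
      (IsAlgClosed.splits ((B * B).charpoly))
    rw [hdeg] at hc
    exact hc
  -- trace bound
  have htr : (B * B).trace = (((A * A).trace : ℤ) : ℂ) := by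
    rw [hB, ← Matrix.map_mul]
    simp [Matrix.trace, Matrix.diag, Matrix.map_apply]
  have h1 : ‖(B * B).trace‖ ≤ (m : ℝ) * R ^ 2 := by
    rw [Matrix.trace_eq_sum_roots_charpoly]
    calc ‖(B * B).charpoly.roots.sum‖
        ≤ (((B * B).charpoly.roots).map (fun x => ‖x‖)).sum := by
          simpa using
            norm_multiset_sum_le ((B * B).charpoly.roots)
      _ ≤ Multiset.card (((B * B).charpoly.roots).map (fun x => ‖x‖)) • (R ^ 2) := by
          apply Multiset.sum_le_card_nsmul
          intro x hx
          obtain ⟨μ, hμ, rfl⟩ := Multiset.mem_map.mp hx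
          exact hroots μ hμ
      _ = (m : ℝ) * R ^ 2 := by
          rw [Multiset.card_map, hcard]; simp [nsmul_eq_mul]
  -- entry bound via trace of A*A
  have h2 : A i j ≤ (A * A).trace := by
    have e1 : A i j ≤ A i j * A j i :=
      le_mul_of_one_le_right (le_trans zero_le_one (hpos i j)) (hpos j i)
    have e2 : A i j * A j i ≤ ∑ l, A i l * A l i := by
      apply Finset.single_le_sum (f := fun l => A i l * A l i)
      · intro l _
        exact mul_nonneg (le_trans zero_le_one (hpos i l)) (le_trans zero_le_one (hpos l i))
      · exact Finset.mem_univ j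
    have e3 : (∑ l, A i l * A l i) ≤ ∑ k, ∑ l, A k l * A l k := by
      apply Finset.single_le_sum (f := fun k => ∑ l, A k l * A l k)
      · intro k _
        exact Finset.sum_nonneg fun l _ =>
          mul_nonneg (le_trans zero_le_one (hpos k l)) (le_trans zero_le_one (hpos l k))
      · exact Finset.mem_univ i
    calc A i j ≤ A i j * A j i := e1
      _ ≤ ∑ l, A i l * A l i := e2
      _ ≤ ∑ k, ∑ l, A k l * A l k := e3
      _ = (A * A).trace := by simp [Matrix.trace, Matrix.diag, Matrix.mul_apply]
  have htrpos : (0 : ℤ) ≤ (A * A).trace := le_trans (le_trans zero_le_one (hpos i j)) h2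
  have h3 : (((A * A).trace : ℤ) : ℝ) ≤ (m : ℝ) * R ^ 2 := by
    have := h1
    rw [htr] at this
    rwa [Complex.norm_intCast, abs_of_nonneg (by exact_mod_cast htrpos)] at this
  have hm1 : (1 : ℝ) ≤ (m : ℝ) := by exact_mod_cast hm
  have hR2 : (0 : ℝ) ≤ R ^ 2 := by
    have : (0:ℝ) ≤ (((A * A).trace : ℤ) : ℝ) := by exact_mod_cast htrpos
    nlinarith
  calc (A i j : ℝ) ≤ (((A * A).trace : ℤ) : ℝ) := by exact_mod_cast h2
    _ ≤ (m : ℝ) * R ^ 2 := h3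
    _ ≤ (m : ℝ) ^ 2 * R ^ 2 :=
        mul_le_mul_of_nonneg_right (by nlinarith) hR2
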